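/- Let Runs : Set (List F) be an arbitrary set of process runs, and call an alignment γ of a log trace e complete if its model projection belongs to Runs. Then the optimal complete-alignment cost equals the minimal edit distance to a run in Runs: ⨅ { κ(γ) : γ a complete alignment of e } = ⨅ { δ(e, f) : f ∈ Runs } (as an equality in ℕ∞, where an empty infimum is ⊤). In particular, an alignment γ of e and some f ∈ Runs with κ(γ) = δ(e, f) = ⨅_{f' ∈ Runs} δ(e, f') is an optimal complete alignment. -/

import Mathlib

variable {E F : Type*}

/-- Edit distance (head recursion, applied to reversed lists to match the
snoc-based recursive definition). -/
noncomputable def editAux (PL : E → ℕ∞) (PM : F → ℕ∞) (Peq : E → F → ℕ∞) : List E → List F → ℕ∞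
  | [], [] => 0
  | a :: e, [] => PL a + editAux PL PM Peq e []
  | [], b :: f => PM b + editAux PL PM Peq [] f
  | a :: e, b :: f =>
      min (editAux PL PM Peq e f + Peq a b)
        (min (PL a + editAux PL PM Peq e (b :: f))
             (PM b + editAux PL PM Peq (a :: e) f))
termination_by e f => e.length + f.length

/-- The edit distance `δ`, satisfying
`δ [] [] = 0`, `δ (e ++ [a]) [] = PL a + δ e []`,
`δ [] (f ++ [b]) = PM b + δ [] f`, and
`δ (e ++ [a]) (f ++ [b]) =
  min (δ e f + Peq a b) (min (PL a + δ e (f ++ [b])) (PM b + δ (e ++ [a]) f))`. -/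
noncomputable def editDist (PL : E → ℕ∞) (PM : F → ℕ∞) (Peq : E → F → ℕ∞)
    (e : List E) (f : List F) : ℕ∞ :=
  editAux PL PM Peq e.reverse f.reverse

/-- Projection of a sequence of moves onto the log component. -/
def logProj (γ : List (Option E × Option F)) : List E := γ.filterMap Prod.fst

/-- Projection of a sequence of moves onto the model component. -/
def modelProj (γ : List (Option E × Option F)) : List F := γ.filterMap Prod.snd

/-- `γ` is an alignment of log trace `e` and process run `f`: it consists of
moves (no `(none, none)` pair), its log projection is `e` and its model
projection is `f`. -/
def IsAlignment (γ : List (Option E × Option F)) (e : List E) (f : List F) : Prop :=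
  (∀ m ∈ γ, m ≠ ((none : Option E), (none : Option F))) ∧
    logProj γ = e ∧ modelProj γ = f

/-- Cost of a single move. -/
def moveCost (PL : E → ℕ∞) (PM : F → ℕ∞) (Peq : E → F → ℕ∞) :
    Option E × Option F → ℕ∞
  | (some a, none) => PL a
  | (none, some b) => PM b
  | (some a, some b) => Peq a b
  | (none, none) => 0

/-- Cost `κ` of an alignment: the sum of the costs of its moves. -/
def alignCost (PL : E → ℕ∞) (PM : F → ℕ∞) (Peq : E → F → ℕ∞)
    (γ : List (Option E × Option F)) : ℕ∞ :=
  (γ.map (moveCost PL PM Peq)).sum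

section Aux
variable (PL : E → ℕ∞) (PM : F → ℕ∞) (Peq : E → F → ℕ∞)

lemma editAux_cons_left_le (a : E) (e : List E) (f : List F) :
    editAux PL PM Peq (a :: e) f ≤ PL a + editAux PL PM Peq e f := by
  cases f with
  | nil => rw [editAux]
  | cons b f =>
      rw [editAux]
      exact le_trans (min_le_right _ _) (min_le_left _ _)

lemma editAux_cons_right_le (b : F) (e : List E) (f : List F) :
    editAux PL PM Peq e (b :: f) ≤ PM b + editAux PL PM Peq e f := by
  cases e with
  | nil => rw [editAux]
  | cons a e =>
      rw [editAux]
      exact le_trans (min_le_right _ _) (min_le_right _ _)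

lemma editAux_cons_cons_le (a : E) (b : F) (e : List E) (f : List F) :
    editAux PL PM Peq (a :: e) (b :: f) ≤ Peq a b + editAux PL PM Peq e f := by
  rw [editAux, add_comm]
  exact min_le_left _ _

lemma alignCost_cons (m : Option E × Option F) (γ : List (Option E × Option F)) :
    alignCost PL PM Peq (m :: γ) = moveCost PL PM Peq m + alignCost PL PM Peq γ := by
  simp [alignCost]

lemma logProj_cons_some (a : E) (ob : Option F) (γ : List (Option E × Option F)) :
    logProj ((some a, ob) :: γ) = a :: logProj γ := by
  simp [logProj, List.filterMap_cons]

lemma logProj_cons_none (ob : Option F) (γ : List (Option E × Option F)) :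
    logProj (((none : Option E), ob) :: γ) = logProj γ := by
  simp [logProj, List.filterMap_cons]

lemma modelProj_cons_some (oa : Option E) (b : F) (γ : List (Option E × Option F)) :
    modelProj ((oa, some b) :: γ) = b :: modelProj γ := by
  simp [modelProj, List.filterMap_cons]

lemma modelProj_cons_none (oa : Option E) (γ : List (Option E × Option F)) :
    modelProj ((oa, (none : Option F)) :: γ) = modelProj γ := by
  simp [modelProj, List.filterMap_cons]

lemma editAux_le_alignCost :
    ∀ (γ : List (Option E × Option F)),
      (∀ m ∈ γ, m ≠ ((none : Option E), (none : Option F))) →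
      editAux PL PM Peq (logProj γ) (modelProj γ) ≤ alignCost PL PM Peq γ := by
  intro γ
  induction γ with
  | nil =>
      intro _
      simp [logProj, modelProj, alignCost]
      rw [editAux]
  | cons m γ ih =>
      intro hm
      have hγ : ∀ m' ∈ γ, m' ≠ ((none : Option E), (none : Option F)) :=
        fun m' h => hm m' (List.mem_cons_of_mem _ h)
      obtain ⟨oa, ob⟩ := m
      match oa, ob with
      | none, none => exact absurd rfl (hm _ List.mem_cons_self)
      | some a, none =>
          rw [logProj_cons_some, modelProj_cons_none, alignCost_cons]
          calc editAux PL PM Peq (a :: logProj γ) (modelProj γ)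
              ≤ PL a + editAux PL PM Peq (logProj γ) (modelProj γ) :=
                editAux_cons_left_le _ _ _ _ _ _
            _ ≤ PL a + alignCost PL PM Peq γ := by
                exact add_le_add_right (ih hγ) _
            _ = moveCost PL PM Peq (some a, none) + alignCost PL PM Peq γ := rfl
      | none, some b =>
          rw [logProj_cons_none, modelProj_cons_some, alignCost_cons]
          calc editAux PL PM Peq (logProj γ) (b :: modelProj γ)
              ≤ PM b + editAux PL PM Peq (logProj γ) (modelProj γ) :=
                editAux_cons_right_le _ _ _ _ _ _
            _ ≤ PM b + alignCost PL PM Peq γ := by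
                exact add_le_add_right (ih hγ) _
            _ = moveCost PL PM Peq (none, some b) + alignCost PL PM Peq γ := rfl
      | some a, some b =>
          rw [logProj_cons_some, modelProj_cons_some, alignCost_cons]
          calc editAux PL PM Peq (a :: logProj γ) (b :: modelProj γ)
              ≤ Peq a b + editAux PL PM Peq (logProj γ) (modelProj γ) :=
                editAux_cons_cons_le _ _ _ _ _ _ _
            _ ≤ Peq a b + alignCost PL PM Peq γ := by
                exact add_le_add_right (ih hγ) _
            _ = moveCost PL PM Peq (some a, some b) + alignCost PL PM Peq γ := rfl

lemma exists_alignment_editAux :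
    ∀ (e : List E) (f : List F),
      ∃ γ : List (Option E × Option F),
        (∀ m ∈ γ, m ≠ ((none : Option E), (none : Option F))) ∧
        logProj γ = e ∧ modelProj γ = f ∧
        alignCost PL PM Peq γ = editAux PL PM Peq e f
  | [], [] => by
      refine ⟨[], by simp, by simp [logProj], by simp [modelProj], ?_⟩
      rw [editAux]; simp [alignCost]
  | a :: e, [] => by
      obtain ⟨γ, h1, h2, h3, h4⟩ := exists_alignment_editAux e []
      refine ⟨(some a, none) :: γ, ?_, ?_, ?_, ?_⟩
      · intro m hm
        rcases List.mem_cons.1 hm with h | h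
        · simp [h]
        · exact h1 m h
      · rw [logProj_cons_some, h2]
      · rw [modelProj_cons_none, h3]
      · rw [alignCost_cons, h4, editAux]; rfl
  | [], b :: f => by
      obtain ⟨γ, h1, h2, h3, h4⟩ := exists_alignment_editAux [] f
      refine ⟨(none, some b) :: γ, ?_, ?_, ?_, ?_⟩
      · intro m hm
        rcases List.mem_cons.1 hm with h | h
        · simp [h]
        · exact h1 m h
      · rw [logProj_cons_none, h2]
      · rw [modelProj_cons_some, h3]
      · rw [alignCost_cons, h4, editAux]; rfl
  | a :: e, b :: f => by
      obtain ⟨γ₁, g1, g2, g3, g4⟩ := exists_alignment_editAux e f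
      obtain ⟨γ₂, i1, i2, i3, i4⟩ := exists_alignment_editAux e (b :: f)
      obtain ⟨γ₃, j1, j2, j3, j4⟩ := exists_alignment_editAux (a :: e) f
      have heq : editAux PL PM Peq (a :: e) (b :: f) =
          min (editAux PL PM Peq e f + Peq a b)
            (min (PL a + editAux PL PM Peq e (b :: f))
                 (PM b + editAux PL PM Peq (a :: e) f)) := by rw [editAux]
      rcases min_cases (editAux PL PM Peq e f + Peq a b)
          (min (PL a + editAux PL PM Peq e (b :: f))
               (PM b + editAux PL PM Peq (a :: e) f)) with ⟨hc, _⟩ | ⟨hc, _⟩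
      · refine ⟨(some a, some b) :: γ₁, ?_, ?_, ?_, ?_⟩
        · intro m hm
          rcases List.mem_cons.1 hm with h | h
          · simp [h]
          · exact g1 m h
        · rw [logProj_cons_some, g2]
        · rw [modelProj_cons_some, g3]
        · rw [alignCost_cons, g4, heq, hc]
          show Peq a b + _ = _
          rw [add_comm]
      · rcases min_cases (PL a + editAux PL PM Peq e (b :: f))
            (PM b + editAux PL PM Peq (a :: e) f) with ⟨hd, _⟩ | ⟨hd, _⟩
        · refine ⟨(some a, none) :: γ₂, ?_, ?_, ?_, ?_⟩
          · intro m hm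
            rcases List.mem_cons.1 hm with h | h
            · simp [h]
            · exact i1 m h
          · rw [logProj_cons_some, i2]
          · rw [modelProj_cons_none, i3]
          · rw [alignCost_cons, i4, heq, hc, hd]; rfl
        · refine ⟨(none, some b) :: γ₃, ?_, ?_, ?_, ?_⟩
          · intro m hm
            rcases List.mem_cons.1 hm with h | h
            · simp [h]
            · exact j1 m h
          · rw [logProj_cons_none, j2]
          · rw [modelProj_cons_some, j3]
          · rw [alignCost_cons, j4, heq, hc, hd]; rfl
termination_by e f => e.length + f.length

lemma logProj_reverse (γ : List (Option E × Option F)) :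
    logProj γ.reverse = (logProj γ).reverse := by
  simp [logProj, List.filterMap_reverse]

lemma modelProj_reverse (γ : List (Option E × Option F)) :
    modelProj γ.reverse = (modelProj γ).reverse := by
  simp [modelProj, List.filterMap_reverse]

lemma alignCost_reverse (γ : List (Option E × Option F)) :
    alignCost PL PM Peq γ.reverse = alignCost PL PM Peq γ := by
  simp [alignCost, List.map_reverse, List.sum_reverse]

lemma editDist_le_alignCost {γ : List (Option E × Option F)} {e : List E} {f : List F}
    (h : IsAlignment γ e f) :
    editDist PL PM Peq e f ≤ alignCost PL PM Peq γ := by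
  obtain ⟨h1, h2, h3⟩ := h
  have := editAux_le_alignCost PL PM Peq γ.reverse
    (fun m hm => h1 m (List.mem_reverse.1 hm))
  rw [logProj_reverse, modelProj_reverse, h2, h3, alignCost_reverse] at this
  exact this

lemma exists_alignment_editDist (e : List E) (f : List F) :
    ∃ γ : List (Option E × Option F),
      IsAlignment γ e f ∧ alignCost PL PM Peq γ = editDist PL PM Peq e f := by
  obtain ⟨γ, h1, h2, h3, h4⟩ := exists_alignment_editAux PL PM Peq e.reverse f.reverse
  refine ⟨γ.reverse, ⟨fun m hm => h1 m (List.mem_reverse.1 hm), ?_, ?_⟩, ?_⟩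
  · rw [logProj_reverse, h2, List.reverse_reverse]
  · rw [modelProj_reverse, h3, List.reverse_reverse]
  · rw [alignCost_reverse, h4]; rfl

end Aux

theorem optimal_complete_alignment_cost
    (PL : E → ℕ∞) (PM : F → ℕ∞) (Peq : E → F → ℕ∞)
    (Runs : Set (List F)) (e : List E) :
    (⨅ γ : {γ : List (Option E × Option F) //
        ∃ f ∈ Runs, IsAlignment γ e f}, alignCost PL PM Peq γ.1) =
      (⨅ f ∈ Runs, editDist PL PM Peq e f) ∧
    ∀ (γ : List (Option E × Option F)) (f : List F), f ∈ Runs →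
      IsAlignment γ e f →
      alignCost PL PM Peq γ = editDist PL PM Peq e f →
      editDist PL PM Peq e f = (⨅ f' ∈ Runs, editDist PL PM Peq e f') →
      alignCost PL PM Peq γ =
        ⨅ γ' : {γ' : List (Option E × Option F) //
          ∃ f' ∈ Runs, IsAlignment γ' e f'}, alignCost PL PM Peq γ'.1 := by
  have main : (⨅ γ : {γ : List (Option E × Option F) //
        ∃ f ∈ Runs, IsAlignment γ e f}, alignCost PL PM Peq γ.1) =
      (⨅ f ∈ Runs, editDist PL PM Peq e f) := by
    apply le_antisymm
    · refine le_iInf₂ fun f hf => ?_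
      obtain ⟨γ, hγ, hc⟩ := exists_alignment_editDist PL PM Peq e f
      calc (⨅ γ : {γ : List (Option E × Option F) //
            ∃ f ∈ Runs, IsAlignment γ e f}, alignCost PL PM Peq γ.1)
          ≤ alignCost PL PM Peq γ := iInf_le (fun γ : {γ : List (Option E × Option F) //
              ∃ f ∈ Runs, IsAlignment γ e f} => alignCost PL PM Peq γ.1) ⟨γ, f, hf, hγ⟩
        _ = editDist PL PM Peq e f := hc
    · refine le_iInf fun γ => ?_
      obtain ⟨γ, f, hf, hγ⟩ := γ
      exact le_trans (iInf₂_le f hf) (editDist_le_alignCost PL PM Peq hγ)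
  refine ⟨main, fun γ f hf hγ hk hd => ?_⟩
  rw [hk, hd, ← main]
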